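/- Let (𝔤,[·,·,·]) be a 3-Lie algebra over ℝ. Then there exists a unique bilinear bracket [·,·]_F on the second exterior power ⋀²𝔤 satisfying [x₁∧x₂, y₁∧y₂]_F = [x₁,x₂,y₁]∧y₂ + y₁∧[x₁,x₂,y₂] for all x₁,x₂,y₁,y₂ ∈ 𝔤, and (⋀²𝔤,[·,·]_F) is a left Leibniz algebra, i.e. [X,[Y,Z]_F]_F = [[X,Y]_F,Z]_F + [Y,[X,Z]_F]_F for all X,Y,Z ∈ ⋀²𝔤. -/

import Mathlib

noncomputable def wedge {g : Type*} [AddCommGroup g] [Module ℝ g] (x y : g) :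
    ⋀[ℝ]^2 g :=
  ⟨ExteriorAlgebra.ιMulti ℝ 2 ![x, y],
    ExteriorAlgebra.ιMulti_range ℝ 2 ⟨![x, y], rfl⟩⟩

section Aux

variable {g N : Type*} [AddCommGroup g] [Module ℝ g] [AddCommGroup N] [Module ℝ N]

lemma wedge_coe (x y : g) :
    (wedge x y : ExteriorAlgebra ℝ g) =
      ExteriorAlgebra.ι ℝ x * ExteriorAlgebra.ι ℝ y := by
  show ExteriorAlgebra.ιMulti ℝ 2 ![x, y] = _
  rw [ExteriorAlgebra.ιMulti_apply]
  simp

lemma wedge_add_left (x x' y : g) : wedge (x + x') y = wedge x y + wedge x' y := by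
  ext; simp [wedge_coe, add_mul]

lemma wedge_add_right (x y y' : g) : wedge x (y + y') = wedge x y + wedge x y' := by
  ext; simp [wedge_coe, mul_add]

lemma wedge_smul_left (r : ℝ) (x y : g) : wedge (r • x) y = r • wedge x y := by
  ext; simp [wedge_coe, smul_mul_assoc]

lemma wedge_smul_right (r : ℝ) (x y : g) : wedge x (r • y) = r • wedge x y := by
  ext; simp [wedge_coe, mul_smul_comm]

lemma wedge_self (x : g) : wedge x x = 0 := by
  ext; simp [wedge_coe, ExteriorAlgebra.ι_sq_zero]

lemma wedge_antisymm (x y : g) : wedge x y = - wedge y x := by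
  ext
  simp only [wedge_coe, NegMemClass.coe_neg]
  exact eq_neg_of_add_eq_zero_left (ExteriorAlgebra.ι_add_mul_swap x y)

omit [AddCommGroup g] [Module ℝ g] in
lemma vec_eta (v : Fin 2 → g) : ![v 0, v 1] = v := by
  funext i; fin_cases i <;> rfl

/-- An alternating map in two variables from a bilinear map vanishing on the diagonal. -/
noncomputable def altOfBilin (f : g →ₗ[ℝ] g →ₗ[ℝ] N) (hf : ∀ m, f m m = 0) :
    g [⋀^Fin 2]→ₗ[ℝ] N where
  toMultilinearMap :=
    { toFun := fun v => f (v 0) (v 1)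
      map_update_add' := fun v i x y => by
        fin_cases i <;> simp [Function.update, Fin.ext_iff, map_add]
      map_update_smul' := fun v i r x => by
        fin_cases i <;> simp [Function.update, Fin.ext_iff, map_smul] }
  map_eq_zero_of_eq' v i j hv hij := by
    fin_cases i <;> fin_cases j <;> simp_all [hf]

@[simp] lemma altOfBilin_apply (f : g →ₗ[ℝ] g →ₗ[ℝ] N) (hf : ∀ m, f m m = 0)
    (v : Fin 2 → g) : altOfBilin f hf v = f (v 0) (v 1) := rfl

/-- Linear map out of the second exterior power induced by an alternating map. -/
noncomputable def liftTwo (f : g [⋀^Fin 2]→ₗ[ℝ] N) : ⋀[ℝ]^2 g →ₗ[ℝ] N :=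
  (ExteriorAlgebra.liftAlternating
    (fun i => match i with | 2 => f | _ => 0)).comp (Submodule.subtype _)

lemma liftTwo_wedge (f : g [⋀^Fin 2]→ₗ[ℝ] N) (x y : g) :
    liftTwo f (wedge x y) = f ![x, y] := by
  show ExteriorAlgebra.liftAlternating _ (ExteriorAlgebra.ιMulti ℝ 2 ![x, y]) = _
  rw [ExteriorAlgebra.liftAlternating_apply_ιMulti]
  rfl

/-- Span induction principle for the second exterior power in terms of wedges. -/
lemma wedge_span_induction {p : ⋀[ℝ]^2 g → Prop}
    (hw : ∀ x y : g, p (wedge x y)) (h0 : p 0)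
    (hadd : ∀ a b, p a → p b → p (a + b))
    (hsmul : ∀ (r : ℝ) a, p a → p (r • a)) :
    ∀ X : ⋀[ℝ]^2 g, p X := by
  intro X
  have hX : (X : ExteriorAlgebra ℝ g) ∈
      Submodule.span ℝ (Set.range (ExteriorAlgebra.ιMulti ℝ 2)) := by
    rw [ExteriorAlgebra.ιMulti_span_fixedDegree]; exact X.2
  have key : ∀ (v : ExteriorAlgebra ℝ g)
      (_ : v ∈ Submodule.span ℝ (Set.range (ExteriorAlgebra.ιMulti ℝ 2)))
      (h : v ∈ ⋀[ℝ]^2 g), p ⟨v, h⟩ := by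
    intro v hv
    induction hv using Submodule.span_induction with
    | mem v hv =>
      intro h
      obtain ⟨w, rfl⟩ := hv
      have : (⟨ExteriorAlgebra.ιMulti ℝ 2 w, h⟩ : ⋀[ℝ]^2 g) = wedge (w 0) (w 1) := by
        ext; show _ = ExteriorAlgebra.ιMulti ℝ 2 ![w 0, w 1]; rw [vec_eta]
      rw [this]; exact hw _ _
    | zero =>
      intro h
      have : (⟨(0 : ExteriorAlgebra ℝ g), h⟩ : ⋀[ℝ]^2 g) = 0 := rfl
      rw [this]; exact h0
    | add a b ha hb iha ihb =>
      intro h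
      have ha' : a ∈ ⋀[ℝ]^2 g := by
        rw [← ExteriorAlgebra.ιMulti_span_fixedDegree]; exact ha
      have hb' : b ∈ ⋀[ℝ]^2 g := by
        rw [← ExteriorAlgebra.ιMulti_span_fixedDegree]; exact hb
      have : (⟨a + b, h⟩ : ⋀[ℝ]^2 g) = ⟨a, ha'⟩ + ⟨b, hb'⟩ := rfl
      rw [this]; exact hadd _ _ (iha ha') (ihb hb')
    | smul r a ha iha =>
      intro h
      have ha' : a ∈ ⋀[ℝ]^2 g := by
        rw [← ExteriorAlgebra.ιMulti_span_fixedDegree]; exact ha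
      have : (⟨r • a, h⟩ : ⋀[ℝ]^2 g) = r • ⟨a, ha'⟩ := rfl
      rw [this]; exact hsmul _ _ (iha ha')
  exact key X hX X.2

/-- Two linear maps out of `⋀²g` agreeing on wedges are equal. -/
lemma wedge_ext {P : Type*} [AddCommMonoid P] [Module ℝ P] (F G : ⋀[ℝ]^2 g →ₗ[ℝ] P)
    (h : ∀ x y : g, F (wedge x y) = G (wedge x y)) : F = G := by
  ext X
  refine wedge_span_induction (p := fun X => F X = G X) h ?_ ?_ ?_ X
  · simp
  · intro a b ha hb; simp [ha, hb]
  · intro r a ha; simp [ha]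

lemma wedge_zero_left (y : g) : wedge (0 : g) y = 0 := by
  ext; simp [wedge_coe]

lemma wedge_zero_right (x : g) : wedge x (0 : g) = 0 := by
  ext; simp [wedge_coe]

/-- The extension of a linear endomorphism `c` of `g` to a "derivation" of `⋀²g`:
`x ∧ y ↦ (c x) ∧ y + x ∧ (c y)`. -/
noncomputable def phiMap (c : g →ₗ[ℝ] g) : ⋀[ℝ]^2 g →ₗ[ℝ] ⋀[ℝ]^2 g :=
  liftTwo (altOfBilin
    (LinearMap.mk₂ ℝ (fun y₁ y₂ => wedge (c y₁) y₂ + wedge y₁ (c y₂))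
      (fun m₁ m₂ n => by simp only [map_add, wedge_add_left, wedge_add_right]; abel)
      (fun r m n => by
        simp only [map_smul, wedge_smul_left, wedge_smul_right, smul_add])
      (fun m n₁ n₂ => by simp only [map_add, wedge_add_left, wedge_add_right]; abel)
      (fun r m n => by
        simp only [map_smul, wedge_smul_left, wedge_smul_right, smul_add]))
    (fun m => by
      simp only [LinearMap.mk₂_apply]
      rw [wedge_antisymm (c m) m]
      exact neg_add_cancel _))

@[simp] lemma phiMap_wedge (c : g →ₗ[ℝ] g) (y₁ y₂ : g) :
    phiMap c (wedge y₁ y₂) = wedge (c y₁) y₂ + wedge y₁ (c y₂) := by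
  rw [phiMap, liftTwo_wedge]
  simp [altOfBilin_apply]

lemma phiMap_add (c c' : g →ₗ[ℝ] g) : phiMap (c + c') = phiMap c + phiMap c' := by
  apply wedge_ext
  intro x y
  simp only [phiMap_wedge, LinearMap.add_apply, wedge_add_left, wedge_add_right]
  abel

lemma phiMap_smul (r : ℝ) (c : g →ₗ[ℝ] g) : phiMap (r • c) = r • phiMap c := by
  apply wedge_ext
  intro x y
  simp only [phiMap_wedge, LinearMap.smul_apply, wedge_smul_left, wedge_smul_right,
    smul_add]

lemma phiMap_zero : phiMap (0 : g →ₗ[ℝ] g) = 0 := by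
  apply wedge_ext
  intro x y
  simp [phiMap_wedge, wedge_zero_left, wedge_zero_right]

end Aux

theorem fundamental_bracket_exists_unique_and_leibniz
    (g : Type*) [AddCommGroup g] [Module ℝ g]
    (br : g → g → g → g)
    (br_add₁ : ∀ x x' y z, br (x + x') y z = br x y z + br x' y z)
    (br_smul₁ : ∀ (r : ℝ) x y z, br (r • x) y z = r • br x y z)
    (br_skew₁₂ : ∀ x y z, br x y z = - br y x z)
    (br_skew₂₃ : ∀ x y z, br x y z = - br x z y)
    (br_fi : ∀ x₁ x₂ x₃ x₄ x₅,
      br x₁ x₂ (br x₃ x₄ x₅) =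
        br (br x₁ x₂ x₃) x₄ x₅ + br x₃ (br x₁ x₂ x₄) x₅ + br x₃ x₄ (br x₁ x₂ x₅)) :
    (∃! B : ⋀[ℝ]^2 g →ₗ[ℝ] ⋀[ℝ]^2 g →ₗ[ℝ] ⋀[ℝ]^2 g,
      ∀ x₁ x₂ y₁ y₂ : g,
        B (wedge x₁ x₂) (wedge y₁ y₂) =
          wedge (br x₁ x₂ y₁) y₂ + wedge y₁ (br x₁ x₂ y₂)) ∧
    (∀ B : ⋀[ℝ]^2 g →ₗ[ℝ] ⋀[ℝ]^2 g →ₗ[ℝ] ⋀[ℝ]^2 g,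
      (∀ x₁ x₂ y₁ y₂ : g,
        B (wedge x₁ x₂) (wedge y₁ y₂) =
          wedge (br x₁ x₂ y₁) y₂ + wedge y₁ (br x₁ x₂ y₂)) →
      ∀ X Y Z : ⋀[ℝ]^2 g, B X (B Y Z) = B (B X Y) Z + B Y (B X Z)) := by
  -- basic consequences of the hypotheses
  have br_cyc : ∀ x y z, br x y z = br z x y := by
    intro x y z
    rw [br_skew₂₃ x y z, br_skew₁₂ x z y, neg_neg]
  have br_add₃ : ∀ x y z z', br x y (z + z') = br x y z + br x y z' := by
    intro x y z z'
    rw [br_cyc x y (z + z'), br_add₁, ← br_cyc x y z, ← br_cyc x y z']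
  have br_smul₃ : ∀ (r : ℝ) x y z, br x y (r • z) = r • br x y z := by
    intro r x y z
    rw [br_cyc x y (r • z), br_smul₁, ← br_cyc]
  have br_diag : ∀ x z, br x x z = 0 := by
    intro x z
    have h := br_skew₁₂ x x z
    have h2 : (2 : ℝ) • br x x z = 0 := by
      rw [two_smul]; nth_rewrite 2 [h]; simp
    have := smul_eq_zero.mp h2
    simpa using this
  -- `br x y` as a linear endomorphism
  let brL : g → g → g →ₗ[ℝ] g := fun x y =>
    ⟨⟨br x y, br_add₃ x y⟩, fun r z => br_smul₃ r x y z⟩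
  have brL_apply : ∀ x y z, brL x y z = br x y z := fun _ _ _ => rfl
  have brL_add₁ : ∀ x x' y, brL (x + x') y = brL x y + brL x' y := by
    intro x x' y; ext z; exact br_add₁ x x' y z
  have brL_smul₁ : ∀ (r : ℝ) x y, brL (r • x) y = r • brL x y := by
    intro r x y; ext z; exact br_smul₁ r x y z
  have brL_add₂ : ∀ x y y', brL x (y + y') = brL x y + brL x y' := by
    intro x y y'; ext z
    show br x (y + y') z = br x y z + br x y' z
    rw [br_skew₁₂ x (y + y') z, br_add₁, br_skew₁₂ x y z, br_skew₁₂ x y' z]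
    abel
  have brL_smul₂ : ∀ (r : ℝ) x y, brL x (r • y) = r • brL x y := by
    intro r x y; ext z
    show br x (r • y) z = r • br x y z
    rw [br_skew₁₂ x (r • y) z, br_smul₁, br_skew₁₂ x y z]
    simp
  have brL_diag : ∀ x, brL x x = 0 := by
    intro x; ext z; exact br_diag x z
  -- the bracket, built with second argument first to keep the codomain `⋀²g`
  let G : ⋀[ℝ]^2 g → (g →ₗ[ℝ] g →ₗ[ℝ] ⋀[ℝ]^2 g) := fun Y =>
    LinearMap.mk₂ ℝ (fun x₁ x₂ => phiMap (brL x₁ x₂) Y)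
      (fun m₁ m₂ n => by
        show phiMap (brL (m₁ + m₂) n) Y = phiMap (brL m₁ n) Y + phiMap (brL m₂ n) Y
        rw [brL_add₁, phiMap_add]; rfl)
      (fun r m n => by
        show phiMap (brL (r • m) n) Y = r • phiMap (brL m n) Y
        rw [brL_smul₁, phiMap_smul]; rfl)
      (fun m n₁ n₂ => by
        show phiMap (brL m (n₁ + n₂)) Y = phiMap (brL m n₁) Y + phiMap (brL m n₂) Y
        rw [brL_add₂, phiMap_add]; rfl)
      (fun r m n => by
        show phiMap (brL m (r • n)) Y = r • phiMap (brL m n) Y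
        rw [brL_smul₂, phiMap_smul]; rfl)
  have Gdiag : ∀ Y m, G Y m m = 0 := by
    intro Y m
    show phiMap (brL m m) Y = 0
    rw [brL_diag, phiMap_zero]; rfl
  let L : ⋀[ℝ]^2 g → (⋀[ℝ]^2 g →ₗ[ℝ] ⋀[ℝ]^2 g) := fun Y =>
    liftTwo (altOfBilin (G Y) (Gdiag Y))
  have L_wedge : ∀ (Y : ⋀[ℝ]^2 g) (x₁ x₂ : g),
      L Y (wedge x₁ x₂) = phiMap (brL x₁ x₂) Y := by
    intro Y x₁ x₂
    show liftTwo (altOfBilin (G Y) (Gdiag Y)) (wedge x₁ x₂) = _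
    rw [liftTwo_wedge]
    show G Y x₁ x₂ = _
    simp [G]
  have L_add : ∀ Y Y', L (Y + Y') = L Y + L Y' := by
    intro Y Y'
    apply wedge_ext
    intro x y
    simp only [L_wedge, LinearMap.add_apply, map_add]
  have L_smul : ∀ (r : ℝ) Y, L (r • Y) = r • L Y := by
    intro r Y
    apply wedge_ext
    intro x y
    simp only [L_wedge, LinearMap.smul_apply, map_smul]
  let M : ⋀[ℝ]^2 g →ₗ[ℝ] ⋀[ℝ]^2 g →ₗ[ℝ] ⋀[ℝ]^2 g :=
    ⟨⟨L, fun Y Y' => L_add Y Y'⟩, fun r Y => L_smul r Y⟩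
  let B₀ : ⋀[ℝ]^2 g →ₗ[ℝ] ⋀[ℝ]^2 g →ₗ[ℝ] ⋀[ℝ]^2 g := M.flip
  have hB₀ : ∀ x₁ x₂ y₁ y₂ : g,
      B₀ (wedge x₁ x₂) (wedge y₁ y₂) =
        wedge (br x₁ x₂ y₁) y₂ + wedge y₁ (br x₁ x₂ y₂) := by
    intro x₁ x₂ y₁ y₂
    show L (wedge y₁ y₂) (wedge x₁ x₂) = _
    rw [L_wedge, phiMap_wedge, brL_apply, brL_apply]
  constructor
  · refine ⟨B₀, hB₀, ?_⟩
    intro B' hB'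
    apply wedge_ext
    intro x y
    apply wedge_ext
    intro a b
    rw [hB' x y a b, hB₀ x y a b]
  · intro B hB X Y Z
    have key : ∀ x₁ x₂ y₁ y₂ z₁ z₂ : g,
        B (wedge x₁ x₂) (B (wedge y₁ y₂) (wedge z₁ z₂)) =
          B (B (wedge x₁ x₂) (wedge y₁ y₂)) (wedge z₁ z₂) +
            B (wedge y₁ y₂) (B (wedge x₁ x₂) (wedge z₁ z₂)) := by
      intro x₁ x₂ y₁ y₂ z₁ z₂
      rw [hB y₁ y₂ z₁ z₂, map_add, hB x₁ x₂, hB x₁ x₂, hB x₁ x₂ y₁ y₂, map_add,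
        LinearMap.add_apply, hB (br x₁ x₂ y₁) y₂, hB y₁ (br x₁ x₂ y₂),
        hB x₁ x₂ z₁ z₂, map_add, hB y₁ y₂, hB y₁ y₂, br_fi x₁ x₂ y₁ y₂ z₁,
        br_fi x₁ x₂ y₁ y₂ z₂]
      simp only [wedge_add_left, wedge_add_right]
      abel
    revert Y Z
    refine wedge_span_induction
      (p := fun X => ∀ Y Z, B X (B Y Z) = B (B X Y) Z + B Y (B X Z))
      ?_ ?_ ?_ ?_ X
    · intro x₁ x₂ Y Z
      revert Z
      refine wedge_span_induction
        (p := fun Y => ∀ Z, B (wedge x₁ x₂) (B Y Z) =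
          B (B (wedge x₁ x₂) Y) Z + B Y (B (wedge x₁ x₂) Z)) ?_ ?_ ?_ ?_ Y
      · intro y₁ y₂
        refine wedge_span_induction
          (p := fun Z => B (wedge x₁ x₂) (B (wedge y₁ y₂) Z) =
            B (B (wedge x₁ x₂) (wedge y₁ y₂)) Z +
              B (wedge y₁ y₂) (B (wedge x₁ x₂) Z)) ?_ ?_ ?_ ?_
        · intro z₁ z₂; exact key x₁ x₂ y₁ y₂ z₁ z₂
        · simp
        · intro a b ha hb
          simp only [map_add, ha, hb]
          abel
        · intro r a ha
          simp only [map_smul, ha, smul_add]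
      · intro Z; simp
      · intro a b ha hb Z
        simp only [map_add, LinearMap.add_apply, ha, hb]
        abel
      · intro r a ha Z
        simp only [map_smul, LinearMap.smul_apply, ha, smul_add]
    · intro Y Z; simp
    · intro a b ha hb Y Z
      simp only [map_add, LinearMap.add_apply, ha, hb]
      abel
    · intro r a ha Y Z
      simp only [map_smul, LinearMap.smul_apply, ha, smul_add]
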